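/- The language { 0^m 1^m : m ∈ ℕ } over the alphabet {0,1} is recognized by a deterministic finite automaton with at most one inkdot of advice. -/

import Mathlib

def markWord {α : Type*} (w : List α) (S : Finset ℕ) : List (α × Bool) :=
  w.zipIdx.map (fun p => (p.1, decide (p.2 ∈ S)))

def RecognizedWithInkdots {α : Type*} (L : Set (List α)) (a : ℕ → ℕ) : Prop :=
  ∃ (σ : Type) (_ : Fintype σ) (M : DFA (α × Bool) σ) (h : ℕ → Finset ℕ),
    (∀ n, ∀ i ∈ h n, i < n) ∧
    (∀ n, (h n).card ≤ a n) ∧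
    (∀ w : List α, w ∈ L ↔ markWord w (h w.length) ∈ M.accepts)

namespace ZeroOneInkdot

inductive St | start | zeros | ones | reject
deriving DecidableEq

instance : Fintype St :=
  ⟨{St.start, St.zeros, St.ones, St.reject}, fun x => by cases x <;> simp⟩

def stp : St → Bool × Bool → St
  | St.start, (false,false) => St.zeros
  | St.start, (true,true) => St.ones
  | St.zeros, (false,false) => St.zeros
  | St.zeros, (true,true) => St.ones
  | St.ones, (true,false) => St.ones
  | _, _ => St.reject

def M : DFA (Bool × Bool) St := ⟨stp, St.start, {St.start, St.ones}⟩

lemma evalFrom_cons (s : St) (a : Bool × Bool) (x : List (Bool × Bool)) :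
    M.evalFrom s (a :: x) = M.evalFrom (stp s a) x := rfl

lemma eval_reject : ∀ x, M.evalFrom St.reject x = St.reject := by
  intro x
  induction x with
  | nil => rfl
  | cons a x ih =>
    rw [evalFrom_cons]
    have : stp St.reject a = St.reject := by
      rcases a with ⟨a1,a2⟩; cases a1 <;> cases a2 <;> rfl
    rw [this]; exact ih

lemma eval_ones : ∀ x, M.evalFrom St.ones x ∈ M.accept ↔
    ∃ j, x = List.replicate j (true, false) := by
  intro x
  induction x with
  | nil =>
    constructor
    · intro _; exact ⟨0, rfl⟩
    · intro _; right; rfl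
  | cons a x ih =>
    rw [evalFrom_cons]
    rcases a with ⟨a1, a2⟩
    cases a1 <;> cases a2 <;>
      simp only [stp, eval_reject, ih]
    · constructor
      · intro h; simp [M, DFA.accept] at h
      · rintro ⟨j, hj⟩
        cases j with
        | zero => simp at hj
        | succ j => simp [List.replicate_succ] at hj
    · constructor
      · intro h; simp [M, DFA.accept] at h
      · rintro ⟨j, hj⟩
        cases j with
        | zero => simp at hj
        | succ j => simp [List.replicate_succ] at hj
    · constructor
      · rintro ⟨j, hj⟩
        exact ⟨j + 1, by simp [List.replicate_succ, hj]⟩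
      · rintro ⟨j, hj⟩
        cases j with
        | zero => simp at hj
        | succ j =>
          rw [List.replicate_succ] at hj
          exact ⟨j, by simpa using hj⟩
    · constructor
      · intro h; simp [M, DFA.accept] at h
      · rintro ⟨j, hj⟩
        cases j with
        | zero => simp at hj
        | succ j => simp [List.replicate_succ] at hj

def Good (x : List (Bool × Bool)) : Prop :=
  ∃ k j, x = List.replicate k (false, false) ++ (true, true) :: List.replicate j (true, false)

lemma eval_zeros : ∀ x, M.evalFrom St.zeros x ∈ M.accept ↔ Good x := by
  intro x
  induction x with
  | nil =>
    constructor
    · rintro (h | h) <;> simp [M] at h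
    · rintro ⟨k, j, hj⟩
      cases k <;> simp [List.replicate_succ] at hj
  | cons a x ih =>
    rw [evalFrom_cons]
    rcases a with ⟨a1, a2⟩
    cases a1 <;> cases a2 <;>
      simp only [stp, eval_reject, ih, eval_ones]
    · -- (false, false) : zeros
      constructor
      · rintro ⟨k, j, hj⟩
        exact ⟨k + 1, j, by simp [List.replicate_succ, hj]⟩
      · rintro ⟨k, j, hj⟩
        cases k with
        | zero => simp at hj
        | succ k =>
          rw [List.replicate_succ] at hj
          exact ⟨k, j, by simpa using hj⟩
    · -- (false, true) : reject
      constructor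
      · intro h; simp [M, DFA.accept] at h
      · rintro ⟨k, j, hj⟩
        cases k with
        | zero => simp at hj
        | succ k => simp [List.replicate_succ] at hj
    · -- (true, false) : reject
      constructor
      · intro h; simp [M, DFA.accept] at h
      · rintro ⟨k, j, hj⟩
        cases k with
        | zero => simp at hj
        | succ k => simp [List.replicate_succ] at hj
    · -- (true, true) : ones
      constructor
      · rintro ⟨j, hj⟩
        exact ⟨0, j, by simp [hj]⟩
      · rintro ⟨k, j, hj⟩
        cases k with
        | zero => exact ⟨j, by simpa using hj⟩
        | succ k => simp [List.replicate_succ] at hj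

lemma eval_start : ∀ x, x ∈ M.accepts ↔ x = [] ∨ Good x := by
  intro x
  rw [DFA.mem_accepts]
  cases x with
  | nil => simp [M, DFA.eval]
  | cons a x =>
    have h1 : M.eval (a :: x) = M.evalFrom (stp St.start a) x := rfl
    have h2 : stp St.start a = stp St.zeros a := by
      rcases a with ⟨a1, a2⟩; cases a1 <;> cases a2 <;> rfl
    rw [h1, h2, ← evalFrom_cons, eval_zeros]
    simp

def adv (n : ℕ) : Finset ℕ := if Even n ∧ n ≠ 0 then {n / 2} else ∅

@[simp] lemma length_markWord {α : Type*} (w : List α) (S : Finset ℕ) :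
    (markWord w S).length = w.length := by
  simp [markWord]

lemma getElem_markWord {α : Type*} (w : List α) (S : Finset ℕ) (i : ℕ)
    (h : i < (markWord w S).length) :
    (markWord w S)[i] = (w[i]'(by simpa [markWord] using h), decide (i ∈ S)) := by
  simp [markWord]

lemma map_fst_markWord {α : Type*} (w : List α) (S : Finset ℕ) :
    (markWord w S).map Prod.fst = w := by
  simp [markWord, List.map_map, Function.comp]
  exact List.zipIdx_map_fst 0 w

lemma adv_two_mul (m : ℕ) (hm : m ≠ 0) : adv (m + m) = {m} := by
  have h1 : Even (m + m) := ⟨m, rfl⟩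
  have h2 : m + m ≠ 0 := by omega
  have : adv (m + m) = {(m + m) / 2} := by
    simp only [adv]
    rw [if_pos ⟨h1, h2⟩]
  rw [this]
  congr 1
  omega

lemma mark_canonical (m : ℕ) :
    markWord (List.replicate (m + 1) false ++ List.replicate (m + 1) true) {m + 1} =
      List.replicate (m + 1) (false, false) ++ (true, true) :: List.replicate m (true, false) := by
  apply List.ext_getElem
  · simp
  · intro i h1 h2
    rw [getElem_markWord]
    have hlen : (List.replicate (m+1) false ++ List.replicate (m+1) true).length = (m+1) + (m+1) := by
      simp
    have hi : i < (m+1) + (m+1) := by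
      rw [length_markWord, hlen] at h1; exact h1
    rcases lt_trichotomy i (m + 1) with hc | hc | hc
    · rw [List.getElem_append_left (by simpa using hc),
        List.getElem_append_left (by simpa using hc)]
      simp
      omega
    · subst hc
      rw [List.getElem_append_right (by simp),
        List.getElem_append_right (by simp)]
      simp
    · rw [List.getElem_append_right (by simp; omega),
        List.getElem_append_right (by simp; omega)]
      have h3 : i - (m + 1) ≠ 0 := by omega
      rcases Nat.exists_eq_succ_of_ne_zero h3 with ⟨r, hr⟩
      simp [hr]
      omega

end ZeroOneInkdot

open ZeroOneInkdot St in
/-- `{0^m 1^m : m ∈ ℕ}` is recognized with at most one inkdot of advice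
(`false` plays the role of `0` and `true` the role of `1`). -/
theorem zeros_ones_one_inkdot :
    RecognizedWithInkdots
      {w : List Bool | ∃ m : ℕ, w = List.replicate m false ++ List.replicate m true}
      (fun _ => 1) := by
  refine ⟨St, inferInstance, M, adv, ?_, ?_, ?_⟩
  · intro n i hi
    simp only [adv] at hi
    split_ifs at hi with hc
    · rw [Finset.mem_singleton] at hi
      omega
    · simp at hi
  · intro n
    simp only [adv]
    split_ifs <;> simp
  · intro w
    rw [eval_start]
    constructor
    · rintro ⟨m, rfl⟩
      cases m with
      | zero => left; rfl
      | succ m =>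
        right
        have hlen : (List.replicate (m+1) false ++ List.replicate (m+1) true).length
            = (m+1) + (m+1) := by simp
        rw [hlen, adv_two_mul (m+1) (by omega)]
        exact ⟨m + 1, m, mark_canonical m⟩
    · rintro (h | ⟨k, j, hx⟩)
      · refine ⟨0, ?_⟩
        have : w.length = 0 := by rw [← length_markWord w (adv w.length), h]; rfl
        simpa using List.eq_nil_of_length_eq_zero this
      · have hlen : w.length = k + (j + 1) := by
          have := congrArg List.length hx
          simpa [length_markWord] using this
        have hklt : k < (markWord w (adv w.length)).length := by
          rw [length_markWord, hlen]; omega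
        have hgetk : (markWord w (adv w.length))[k] = (true, true) := by
          rw [List.getElem_of_eq hx hklt, List.getElem_append_right (by simp)]
          simp
        rw [getElem_markWord] at hgetk
        have hkmem : k ∈ adv w.length := by
          have := congrArg Prod.snd hgetk
          simpa using this
        simp only [adv] at hkmem
        split_ifs at hkmem with hc
        · rw [Finset.mem_singleton] at hkmem
          obtain ⟨hev, _⟩ := hc
          obtain ⟨r, hr⟩ := hev
          have hjk : j + 1 = k := by omega
          refine ⟨k, ?_⟩
          have hw : w = (markWord w (adv w.length)).map Prod.fst :=
            (map_fst_markWord w _).symm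
          rw [hw, hx]
          simp [← hjk, List.replicate_succ]
        · simp at hkmem
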